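/- Let M be an R-module having the descending chain condition on socle submodules (every descending chain of socle submodules of M stabilizes). Then Spec^s(M), with the second classical Zariski topology, is a spectral space; that is, it is a T0-space, it is quasi-compact, its quasi-compact open subsets are closed under finite intersections and form an open basis, and every irreducible closed subset has a generic point. -/

import Mathlib

open Pointwise

variable (R M : Type*) [CommRing R] [AddCommGroup M] [Module R M]

/-- A nonzero submodule `S` is *second* if for every `r : R`, `r • S = S` or `r • S = ⊥`. -/
def IsSecondSubmodule (S : Submodule R M) : Prop :=
  S ≠ ⊥ ∧ ∀ r : R, r • S = S ∨ r • S = ⊥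

/-- The second spectrum of `M`: the collection of all second submodules of `M`. -/
def SecondSpec : Type _ := {S : Submodule R M // IsSecondSubmodule R M S}

/-- `V^{s*}(N)`: the set of second submodules contained in `N`. -/
def Vs (N : Submodule R M) : Set (SecondSpec R M) := {S | S.1 ≤ N}

/-- `W^s(N)`: the complement of `V^{s*}(N)` in `Spec^s(M)`. -/
def Ws (N : Submodule R M) : Set (SecondSpec R M) := (Vs R M N)ᶜ

/-- The second classical Zariski topology on `Spec^s(M)`, generated by the
sub-basis `{W^s(N) : N ≤ M}`. -/
instance secondZariski : TopologicalSpace (SecondSpec R M) :=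
  TopologicalSpace.generateFrom {U | ∃ N : Submodule R M, U = Ws R M N}

/-- The second socle of a submodule `N`: the sum of all second submodules of `M`
contained in `N`. -/
def secSocle (N : Submodule R M) : Submodule R M :=
  sSup {S : Submodule R M | IsSecondSubmodule R M S ∧ S ≤ N}

section Aux
variable {R M}

lemma secSocle_le (N : Submodule R M) : secSocle R M N ≤ N :=
  sSup_le fun _ h => h.2

lemma le_secSocle {S N : Submodule R M} (hS : IsSecondSubmodule R M S) (h : S ≤ N) :
    S ≤ secSocle R M N :=
  le_sSup ⟨hS, h⟩

lemma secSocle_mono {N K : Submodule R M} (h : N ≤ K) : secSocle R M N ≤ secSocle R M K :=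
  sSup_le fun _ hs => le_sSup ⟨hs.1, hs.2.trans h⟩

lemma secSocle_idem (N : Submodule R M) : secSocle R M (secSocle R M N) = secSocle R M N :=
  le_antisymm (secSocle_le _) (sSup_le fun _ hs => le_secSocle hs.1 (le_secSocle hs.1 hs.2))

lemma isOpen_Ws (N : Submodule R M) : IsOpen (Ws R M N) :=
  TopologicalSpace.isOpen_generateFrom_of_mem ⟨N, rfl⟩

lemma isClosed_Vs (N : Submodule R M) : IsClosed (Vs R M N) :=
  ⟨by rw [show (Vs R M N)ᶜ = Ws R M N from rfl]; exact isOpen_Ws N⟩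

lemma mem_rsmul {r : R} {S : Submodule R M} {x : M} : x ∈ r • S ↔ ∃ y ∈ S, r • y = x :=
  Submodule.mem_map

lemma rsmul_le_self (r : R) (S : Submodule R M) : r • S ≤ S := by
  rintro x hx
  obtain ⟨y, hy, rfl⟩ := mem_rsmul.1 hx
  exact S.smul_mem r hy

lemma rsmul_mono (r : R) {S T : Submodule R M} (h : S ≤ T) : r • S ≤ r • T := by
  rintro x hx
  obtain ⟨y, hy, rfl⟩ := mem_rsmul.1 hx
  exact mem_rsmul.2 ⟨y, h hy, rfl⟩

lemma rsmul_eq_bot_iff {r : R} {S : Submodule R M} :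
    r • S = ⊥ ↔ S ≤ LinearMap.ker (LinearMap.lsmul R M r) := by
  rw [eq_bot_iff]
  constructor
  · intro h x hx
    simpa [LinearMap.mem_ker] using h (mem_rsmul.2 ⟨x, hx, rfl⟩)
  · intro h x hx
    obtain ⟨y, hy, rfl⟩ := mem_rsmul.1 hx
    simpa using (LinearMap.mem_ker).1 (h hy)

lemma isOpen_iff' {U : Set (SecondSpec R M)} :
    IsOpen U ↔ TopologicalSpace.GenerateOpen {V | ∃ N : Submodule R M, V = Ws R M N} U :=
  Iff.rfl

lemma generateOpen_spec {U : Set (SecondSpec R M)}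
    (hU : TopologicalSpace.GenerateOpen {V | ∃ N : Submodule R M, V = Ws R M N} U) :
    ∀ T y : SecondSpec R M, T.1 ≤ y.1 → T ∈ U → y ∈ U := by
  induction hU with
  | basic V hV =>
    rintro T y h hT
    obtain ⟨N, rfl⟩ := hV
    exact fun hy => hT (h.trans hy)
  | univ => intros; trivial
  | inter U V _ _ ihU ihV => exact fun T y h hT => ⟨ihU T y h hT.1, ihV T y h hT.2⟩
  | sUnion S _ ih => rintro T y h ⟨V, hV, hT⟩; exact ⟨V, hV, ih V hV T y h hT⟩

/-- minimal elements exist in nonempty families of socle submodules, under dcc -/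
lemma exists_minimal_socle
    (hdcc : ∀ f : ℕ → Submodule R M, (∀ n, secSocle R M (f n) = f n) →
      (∀ n, f (n + 1) ≤ f n) → ∃ n, ∀ m, n ≤ m → f m = f n)
    (𝒮 : Set (Submodule R M)) (hne : 𝒮.Nonempty)
    (hsoc : ∀ K ∈ 𝒮, secSocle R M K = K) :
    ∃ L ∈ 𝒮, ∀ K ∈ 𝒮, K ≤ L → K = L := by
  by_contra h
  push_neg at h
  choose g hg1 hg2 hg3 using h
  obtain ⟨L0, hL0⟩ := hne
  let f : ℕ → {K : Submodule R M // K ∈ 𝒮} := fun n =>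
    Nat.rec ⟨L0, hL0⟩ (fun _ p => ⟨g p.1 p.2, hg1 p.1 p.2⟩) n
  obtain ⟨n, hn⟩ := hdcc (fun n => (f n).1) (fun n => hsoc _ (f n).2)
    (fun n => hg2 (f n).1 (f n).2)
  exact hg3 (f n).1 (f n).2 (hn (n + 1) (Nat.le_succ n))

lemma isCompact_all
    (hdcc : ∀ f : ℕ → Submodule R M, (∀ n, secSocle R M (f n) = f n) →
      (∀ n, f (n + 1) ≤ f n) → ∃ n, ∀ m, n ≤ m → f m = f n)
    (t : Set (SecondSpec R M)) : IsCompact t := by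
  classical
  rw [isCompact_iff_ultrafilter_le_nhds]
  intro F hF
  have hFt : t ∈ F := Filter.le_principal_iff.1 hF
  set 𝒩 : Set (Submodule R M) := {N | Vs R M N ∈ F} with h𝒩
  have hVsinf : ∀ G : Finset (Submodule R M), ↑G ⊆ 𝒩 → Vs R M (G.inf id) ∈ F := by
    intro G
    induction G using Finset.induction_on with
    | empty =>
      intro _
      have : Vs R M ((∅ : Finset (Submodule R M)).inf id) = Set.univ := by
        ext S; simp [Vs, Finset.inf_empty, le_top]
      rw [this]; exact Filter.univ_mem
    | insert a s ha ih =>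
      intro h
      rw [Finset.inf_insert]
      have : Vs R M (id a ⊓ s.inf id) = Vs R M a ∩ Vs R M (s.inf id) := by
        ext S; simp [Vs, le_inf_iff]
      rw [this]
      exact Filter.inter_mem (h (by simp)) (ih fun x hx => h (by simp [hx]))
  set 𝒮 : Set (Submodule R M) :=
    {K | ∃ G : Finset (Submodule R M), ↑G ⊆ 𝒩 ∧ K = secSocle R M (G.inf id)} with h𝒮
  obtain ⟨L, hL𝒮, hLmin⟩ := exists_minimal_socle hdcc 𝒮
    ⟨secSocle R M ((∅ : Finset (Submodule R M)).inf id), ∅, by simp, rfl⟩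
    (by rintro K ⟨G, _, rfl⟩; exact secSocle_idem _)
  obtain ⟨G, hG, rfl⟩ := hL𝒮
  have key : ∀ N ∈ 𝒩, secSocle R M (G.inf id) ≤ N := by
    intro N hN
    have hmem : secSocle R M ((insert N G).inf id) ∈ 𝒮 :=
      ⟨insert N G, by
        intro x hx
        rcases Finset.mem_insert.1 (by exact_mod_cast hx) with h | h
        · subst h; exact hN
        · exact hG h, rfl⟩
    have hle : secSocle R M ((insert N G).inf id) ≤ secSocle R M (G.inf id) :=
      secSocle_mono (by rw [Finset.inf_insert]; exact inf_le_right)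
    have heq := hLmin _ hmem hle
    calc secSocle R M (G.inf id) = secSocle R M ((insert N G).inf id) := heq.symm
      _ ≤ (insert N G).inf id := secSocle_le _
      _ ≤ N := by rw [Finset.inf_insert]; exact inf_le_left
  obtain ⟨x, hxt, hxV⟩ :=
    Ultrafilter.nonempty_of_mem (Filter.inter_mem hFt (hVsinf G hG))
  refine ⟨x, hxt, ?_⟩
  rw [TopologicalSpace.nhds_generateFrom]
  refine le_iInf fun s => le_iInf fun hs => ?_
  obtain ⟨hxs, N, rfl⟩ := hs
  rw [Filter.le_principal_iff]
  by_contra hWs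
  have hVs : Vs R M N ∈ F := by
    have := (Ultrafilter.compl_mem_iff_notMem (f := F)).2 hWs
    simpa [Ws, compl_compl] using this
  have hx2 : x.1 ≤ secSocle R M (G.inf id) := le_secSocle x.2 hxV
  exact hxs (hx2.trans (key N hVs))

lemma mem_closure_of_preirr {Y : Set (SecondSpec R M)} (hY : IsPreirreducible Y)
    (hne : Y.Nonempty) (L : SecondSpec R M)
    (hL : ∀ N : Submodule R M, (∀ S ∈ Y, S.1 ≤ N) → L.1 ≤ N) : L ∈ closure Y := by
  rw [mem_closure_iff]
  intro o ho hLo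
  have main : ∀ U : Set (SecondSpec R M),
      TopologicalSpace.GenerateOpen {V | ∃ N : Submodule R M, V = Ws R M N} U →
      L ∈ U → (U ∩ Y).Nonempty := by
    intro U hU
    induction hU with
    | basic V hV =>
      intro hLV
      obtain ⟨N, rfl⟩ := hV
      by_contra hc
      refine hLV (hL N fun S hS => ?_)
      by_contra hSN
      exact hc ⟨S, hSN, hS⟩
    | univ => intro _; simpa using hne
    | inter U V hU hV ihU ihV =>
      intro hLUV
      obtain ⟨a, haU, haY⟩ := ihU hLUV.1
      obtain ⟨b, hbV, hbY⟩ := ihV hLUV.2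
      obtain ⟨c, hcY, hcU, hcV⟩ :=
        hY U V (isOpen_iff'.2 hU) (isOpen_iff'.2 hV) ⟨a, haY, haU⟩ ⟨b, hbY, hbV⟩
      exact ⟨c, ⟨hcU, hcV⟩, hcY⟩
    | sUnion S hS ih =>
      rintro ⟨V, hV, hLV⟩
      obtain ⟨a, haV, haY⟩ := ih V hV hLV
      exact ⟨a, ⟨V, hV, haV⟩, haY⟩
  exact main o (isOpen_iff'.1 ho) hLo


end Aux

/-- Thm 3.11: if `M` has dcc on socle submodules, then `Spec^s(M)` with the second
classical Zariski topology is a spectral space (Hochster's characterization): it is T0,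
quasi-compact, its quasi-compact open subsets are closed under finite intersections and
form an open basis, and every irreducible closed subset has a generic point. -/
theorem stmt19
    (hdcc : ∀ f : ℕ → Submodule R M, (∀ n, secSocle R M (f n) = f n) →
      (∀ n, f (n + 1) ≤ f n) → ∃ n, ∀ m, n ≤ m → f m = f n) :
    T0Space (SecondSpec R M) ∧
      CompactSpace (SecondSpec R M) ∧
      (∀ U V : Set (SecondSpec R M),
        IsOpen U → IsCompact U → IsOpen V → IsCompact V → IsCompact (U ∩ V)) ∧
      TopologicalSpace.IsTopologicalBasis
        {U : Set (SecondSpec R M) | IsOpen U ∧ IsCompact U} ∧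
      (∀ Y : Set (SecondSpec R M), IsIrreducible Y → IsClosed Y →
        ∃ y, Y = closure {y}) := by
  refine ⟨?_, ⟨isCompact_all hdcc _⟩, fun U V _ _ _ _ => isCompact_all hdcc _, ?_, ?_⟩
  · refine ⟨fun x y h => Subtype.ext (le_antisymm ?_ ?_)⟩
    · by_contra hxy
      exact ((h.mem_open_iff (isOpen_Ws y.1)).1 hxy) (show y.1 ≤ y.1 from le_rfl)
    · by_contra hyx
      exact ((h.mem_open_iff (isOpen_Ws x.1)).2 hyx) (show x.1 ≤ x.1 from le_rfl)
  · have heq : {U : Set (SecondSpec R M) | IsOpen U ∧ IsCompact U} =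
        {U : Set (SecondSpec R M) | IsOpen U} :=
      Set.ext fun U => and_iff_left (isCompact_all hdcc U)
    rw [heq]
    exact TopologicalSpace.isTopologicalBasis_opens
  · intro Y hY hYc
    obtain ⟨hne, hpre⟩ := hY
    set L : Submodule R M := sSup (Subtype.val '' Y) with hLdef
    have hub : ∀ S ∈ Y, S.1 ≤ L := fun S hS => le_sSup ⟨S, hS, rfl⟩
    have hLle : ∀ N : Submodule R M, (∀ S ∈ Y, S.1 ≤ N) → L ≤ N := fun N h =>
      sSup_le (by rintro _ ⟨S, hS, rfl⟩; exact h S hS)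
    obtain ⟨S₀, hS₀⟩ := hne
    have hLne : L ≠ ⊥ := fun h => S₀.2.1 (le_bot_iff.1 (h ▸ hub S₀ hS₀))
    have hsecond : IsSecondSubmodule R M L := by
      refine ⟨hLne, fun r => ?_⟩
      have hcover : Y ⊆ Vs R M (LinearMap.ker (LinearMap.lsmul R M r)) ∪ Vs R M (r • L) := by
        intro S hS
        rcases S.2.2 r with h | h
        · right
          show S.1 ≤ r • L
          calc S.1 = r • S.1 := h.symm
            _ ≤ r • L := rsmul_mono r (hub S hS)
        · left
          exact rsmul_eq_bot_iff.1 h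
      rcases (isPreirreducible_iff_isClosed_union_isClosed.1 hpre) _ _
        (isClosed_Vs _) (isClosed_Vs _) hcover with h | h
      · right
        exact rsmul_eq_bot_iff.2 (hLle _ fun S hS => h hS)
      · left
        exact le_antisymm (rsmul_le_self r L) (hLle _ fun S hS => h hS)
    set y : SecondSpec R M := ⟨L, hsecond⟩
    have hyY : y ∈ Y := hYc.closure_eq ▸ mem_closure_of_preirr hpre ⟨S₀, hS₀⟩ y hLle
    refine ⟨y, Set.Subset.antisymm ?_ ?_⟩
    · intro S hS
      rw [mem_closure_iff]
      intro o ho hSo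
      exact ⟨y, generateOpen_spec (isOpen_iff'.1 ho) S y (hub S hS) hSo, rfl⟩
    · exact hYc.closure_eq ▸ closure_mono (Set.singleton_subset_iff.2 hyY)
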